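/- Assume the pushforward measure of f is atomless. Suppose there exist measurable sets U, U' ⊆ X with μ(U) > 0 and μ(U') > 0 such that for all x ∈ U and all x' ∈ U', f(x) ≤ f(x') and g(x) > g(x'). Let t ∈ [0,1] satisfy f(x) ≤ t for all x ∈ U and t ≤ f(x') for all x' ∈ U'. Then for every t' ∈ [0,1], the threshold-t decision on f does not agree μ-almost everywhere with the threshold-t' decision on g. -/

import Mathlib

open MeasureTheory

/-- forward direction of Theorem 3.7, as in its proof.
If positive-measure sets `U`, `U'` witness a violation of comonotonicity of
`f` and `g` (`f` is at most `t` on `U` and at least `t` on `U'`, while `g` is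
strictly larger on `U` than on `U'`), then the threshold-`t` decision on `f`
cannot agree `μ`-a.e. with any threshold decision on `g`. -/
theorem threshold_decision_not_realizable
    {X : Type*} [MeasurableSpace X] (μ : Measure X) [IsProbabilityMeasure μ]
    (f g : X → ℝ) (hf : Measurable f) (hg : Measurable g)
    (hf01 : ∀ x, f x ∈ Set.Icc (0 : ℝ) 1) (hg01 : ∀ x, g x ∈ Set.Icc (0 : ℝ) 1)
    (hfAtomless : ∀ c : ℝ, μ.map f {c} = 0)
    (U U' : Set X) (hU : MeasurableSet U) (hU' : MeasurableSet U')
    (hUpos : 0 < μ U) (hU'pos : 0 < μ U')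
    (hUU' : ∀ x ∈ U, ∀ x' ∈ U', f x ≤ f x' ∧ g x' < g x)
    (t : ℝ) (ht : t ∈ Set.Icc (0 : ℝ) 1)
    (htU : ∀ x ∈ U, f x ≤ t) (htU' : ∀ x' ∈ U', t ≤ f x') :
    ∀ t' ∈ Set.Icc (0 : ℝ) 1,
      ¬ ((fun x => if t < f x then (1 : ℝ) else 0) =ᵐ[μ]
          (fun x => if t' < g x then (1 : ℝ) else 0)) := by
  intro t' _ h
  -- the set where the two decisions differ is null
  have hT : μ (f ⁻¹' {t}) = 0 := by
    have := hfAtomless t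
    rwa [Measure.map_apply hf (measurableSet_singleton t)] at this
  set N : Set X := {x | ¬ ((if t < f x then (1 : ℝ) else 0) = (if t' < g x then (1 : ℝ) else 0))} with hN
  have hNnull : μ N = 0 := h
  -- pick a good point in U
  have hA : 0 < μ (U \ N) := by
    have : μ (U \ N) = μ U := measure_diff_null hNnull
    rwa [this]
  obtain ⟨x, hxU, hxN⟩ := nonempty_of_measure_ne_zero hA.ne'
  -- pick a good point in U'
  have hB : 0 < μ (U' \ (N ∪ f ⁻¹' {t})) := by
    have hnull : μ (N ∪ f ⁻¹' {t}) = 0 :=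
      le_antisymm (le_trans (measure_union_le _ _) (by rw [hNnull, hT, add_zero])) zero_le
    have : μ (U' \ (N ∪ f ⁻¹' {t})) = μ U' := measure_diff_null hnull
    rwa [this]
  obtain ⟨x', hxU', hxB⟩ := nonempty_of_measure_ne_zero hB.ne'
  have hx'N : x' ∉ N := fun hc => hxB (Or.inl hc)
  have hx't : f x' ≠ t := fun hc => hxB (Or.inr hc)
  have hxeq : (if t < f x then (1 : ℝ) else 0) = (if t' < g x then (1 : ℝ) else 0) := by
    by_contra hc; exact hxN hc
  have hx'eq : (if t < f x' then (1 : ℝ) else 0) = (if t' < g x' then (1 : ℝ) else 0) := by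
    by_contra hc; exact hx'N hc
  have h1 : ¬ t < f x := not_lt.mpr (htU x hxU)
  have h2 : t < f x' := lt_of_le_of_ne (htU' x' hxU') (Ne.symm hx't)
  rw [if_neg h1] at hxeq
  rw [if_pos h2] at hx'eq
  have hgx : ¬ t' < g x := by
    by_contra hc
    rw [if_pos hc] at hxeq
    norm_num at hxeq
  have hgx' : t' < g x' := by
    by_contra hc
    rw [if_neg hc] at hx'eq
    norm_num at hx'eq
  have := (hUU' x hxU x' hxU').2
  linarith [not_lt.mp hgx]
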